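/- Let $u, v, w \in \mathbb{R}^7$ be orthonormal with $\varphi_0(u,v,w) = 0$ (a $G_2$-frame), and set $R = \chi(u,v,w)$. Then $R$ is a unit vector and $R$ is orthogonal to each of $u$, $v$, $w$. -/

import Mathlib

noncomputable section
open scoped RealInnerProductSpace

abbrev R7 : Type := EuclideanSpace ℝ (Fin 7)

/-- standard basis vector -/
def e (k : Fin 7) : R7 := EuclideanSpace.single k 1

/-- `e^{ijk}(u,v,w)` -/
def tri (i j k : Fin 7) (u v w : R7) : ℝ :=
  Matrix.det !![u i, u j, u k; v i, v j, v k; w i, w j, w k]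

/-- the standard `G₂` 3-form `φ₀` (indices shifted to 0-based) -/
def phi0 (u v w : R7) : ℝ :=
  tri 0 1 2 u v w + tri 0 3 4 u v w + tri 0 5 6 u v w + tri 1 3 5 u v w
    - tri 1 4 6 u v w - tri 2 3 6 u v w - tri 2 4 5 u v w

/-- `e^{ijkl}(u,v,w,z)` -/
def quad (i j k l : Fin 7) (u v w z : R7) : ℝ :=
  Matrix.det !![u i, u j, u k, u l; v i, v j, v k, v l;
    w i, w j, w k, w l; z i, z j, z k, z l]

/-- the 4-form `⋆φ₀` -/
def starphi0 (u v w z : R7) : ℝ :=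
  quad 3 4 5 6 u v w z + quad 1 2 5 6 u v w z + quad 1 2 3 4 u v w z
    + quad 0 2 4 6 u v w z - quad 0 2 3 5 u v w z - quad 0 1 4 5 u v w z
    - quad 0 1 3 6 u v w z

/-- the cross product: `⟪u × v, w⟫ = φ₀(u,v,w)` -/
def cross (u v : R7) : R7 :=
  (WithLp.equiv 2 (Fin 7 → ℝ)).symm fun k => phi0 u v (e k)

/-- the associator `χ`: `⟪χ(u,v,w), z⟫ = ⋆φ₀(u,v,w,z)` -/
def chi (u v w : R7) : R7 :=
  (WithLp.equiv 2 (Fin 7 → ℝ)).symm fun k => starphi0 u v w (e k)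

/-- the coassociator `σ` -/
def sigma (a b c d : R7) : R7 :=
  ⟪b, cross c d⟫ • a + ⟪c, cross a d⟫ • b + ⟪a, cross b d⟫ • c + ⟪b, cross a c⟫ • d

/-- Gram determinant `|u ∧ v ∧ w|²` -/
def gram3 (u v w : R7) : ℝ :=
  Matrix.det !![⟪u,u⟫, ⟪u,v⟫, ⟪u,w⟫; ⟪v,u⟫, ⟪v,v⟫, ⟪v,w⟫; ⟪w,u⟫, ⟪w,v⟫, ⟪w,w⟫]

/-- Gram determinant `|u ∧ v ∧ w ∧ z|²` -/
def gram4 (u v w z : R7) : ℝ :=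
  Matrix.det !![⟪u,u⟫, ⟪u,v⟫, ⟪u,w⟫, ⟪u,z⟫;
    ⟪v,u⟫, ⟪v,v⟫, ⟪v,w⟫, ⟪v,z⟫;
    ⟪w,u⟫, ⟪w,v⟫, ⟪w,w⟫, ⟪w,z⟫;
    ⟪z,u⟫, ⟪z,v⟫, ⟪z,w⟫, ⟪z,z⟫]

set_option maxHeartbeats 1600000

theorem det4' (a b c d e f g h i j k l m n o p : ℝ) :
    Matrix.det !![a,b,c,d;e,f,g,h;i,j,k,l;m,n,o,p] =
      a*(f*(k*p-l*o)-g*(j*p-l*n)+h*(j*o-k*n))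
      - b*(e*(k*p-l*o)-g*(i*p-l*m)+h*(i*o-k*m))
      + c*(e*(j*p-l*n)-f*(i*p-l*m)+h*(i*n-j*m))
      - d*(e*(j*o-k*n)-f*(i*o-k*m)+g*(i*n-j*m)) := by
  simp [Matrix.det_succ_row_zero, Fin.sum_univ_succ, Fin.succAbove]
  ring

theorem det3' (a b c d e f g h i : ℝ) :
    Matrix.det !![a,b,c;d,e,f;g,h,i] =
      a*(e*i-f*h)-b*(d*i-f*g)+c*(d*h-e*g) := by
  simp [Matrix.det_fin_three]
  ring

theorem cross_inner (a b z : R7) : ⟪cross a b, z⟫ = phi0 a b z := by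
  simp only [cross, PiLp.inner_apply, RCLike.inner_apply, conj_trivial,
    WithLp.equiv_symm_apply, PiLp.toLp_apply, phi0, tri, det3', e,
    Fin.sum_univ_seven, EuclideanSpace.single_apply, Fin.reduceEq, reduceIte]
  ring

theorem cross_norm (a b : R7) :
    ⟪cross a b, cross a b⟫ = ⟪a,a⟫*⟪b,b⟫ - ⟪a,b⟫^2 := by
  simp only [cross, PiLp.inner_apply, RCLike.inner_apply, conj_trivial,
    WithLp.equiv_symm_apply, PiLp.toLp_apply, phi0, tri, det3', e,
    Fin.sum_univ_seven, EuclideanSpace.single_apply, Fin.reduceEq, reduceIte]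
  ring

theorem chi_inner (u v w z : R7) : ⟪chi u v w, z⟫ = starphi0 u v w z := by
  simp only [chi, PiLp.inner_apply, RCLike.inner_apply, conj_trivial,
    WithLp.equiv_symm_apply, PiLp.toLp_apply, starphi0, quad, det4', e,
    Fin.sum_univ_seven, EuclideanSpace.single_apply, Fin.reduceEq, reduceIte]
  ring

theorem star_u (u v w : R7) : starphi0 u v w u = 0 := by
  simp only [starphi0, quad, det4']; ring
theorem star_v (u v w : R7) : starphi0 u v w v = 0 := by
  simp only [starphi0, quad, det4']; ring
theorem star_w (u v w : R7) : starphi0 u v w w = 0 := by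
  simp only [starphi0, quad, det4']; ring

theorem chi_expand (u v w z : R7) :
    ⟪chi u v w, z⟫ = ⟪cross (cross u v) w, z⟫ + ⟪v,w⟫*⟪u,z⟫ - ⟪u,w⟫*⟪v,z⟫ := by
  simp only [chi, cross, PiLp.inner_apply, RCLike.inner_apply, conj_trivial,
    WithLp.equiv_symm_apply, PiLp.toLp_apply, starphi0, quad, det4', phi0, tri, det3', e,
    Fin.sum_univ_seven, EuclideanSpace.single_apply, Fin.reduceEq, reduceIte]
  ring


theorem stmt6 (u v w : R7) (hu : ‖u‖ = 1) (hv : ‖v‖ = 1) (hw : ‖w‖ = 1)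
    (huv : ⟪u, v⟫ = 0) (hvw : ⟪v, w⟫ = 0) (huw : ⟪u, w⟫ = 0)
    (hphi : phi0 u v w = 0) :
    ‖chi u v w‖ = 1 ∧ ⟪chi u v w, u⟫ = 0 ∧ ⟪chi u v w, v⟫ = 0 ∧
      ⟪chi u v w, w⟫ = 0 := by
  have hcu : ⟪chi u v w, u⟫ = 0 := by rw [chi_inner]; exact star_u u v w
  have hcv : ⟪chi u v w, v⟫ = 0 := by rw [chi_inner]; exact star_v u v w
  have hcw : ⟪chi u v w, w⟫ = 0 := by rw [chi_inner]; exact star_w u v w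
  refine ⟨?_, hcu, hcv, hcw⟩
  have huu : ⟪u, u⟫ = 1 := by rw [real_inner_self_eq_norm_mul_norm, hu]; norm_num
  have hvv : ⟪v, v⟫ = 1 := by rw [real_inner_self_eq_norm_mul_norm, hv]; norm_num
  have hww : ⟪w, w⟫ = 1 := by rw [real_inner_self_eq_norm_mul_norm, hw]; norm_num
  have hpw : ⟪cross u v, w⟫ = 0 := by rw [cross_inner]; exact hphi
  have hpp : ⟪cross u v, cross u v⟫ = 1 := by
    rw [cross_norm, huu, hvv, huv]; norm_num
  have hqq : ⟪cross (cross u v) w, cross (cross u v) w⟫ = 1 := by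
    rw [cross_norm, hpp, hww, hpw]; norm_num
  have hcq : ⟪chi u v w, cross (cross u v) w⟫ = 1 := by
    rw [chi_expand, hvw, huw, hqq]; ring
  have hcc : ⟪chi u v w, chi u v w⟫ = 1 := by
    rw [chi_expand, hvw, huw]
    rw [real_inner_comm] at hcq
    rw [hcq]; ring
  have hn : ‖chi u v w‖ * ‖chi u v w‖ = 1 := by
    rw [← real_inner_self_eq_norm_mul_norm, hcc]
  nlinarith [norm_nonneg (chi u v w)]
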